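/- Let f : ℝ^n → ℝ be continuous and bounded from below, let t > 0, and suppose the Moreau envelope u(·,t) is (Fréchet) differentiable at a point x ∈ ℝ^n. Then prox_{tf}(x) is a singleton {x̂}, and ∇u(x,t) = (x − x̂)/t. -/

import Mathlib

open Filter Topology

/-- The Moreau envelope `u(x, t) = ⨅ z, f z + ‖z - x‖² / (2t)`. -/
noncomputable def moreauEnv {n : ℕ} (f : EuclideanSpace ℝ (Fin n) → ℝ) (t : ℝ)
    (x : EuclideanSpace ℝ (Fin n)) : ℝ :=
  ⨅ z, f z + ‖z - x‖ ^ 2 / (2 * t)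

/-- The proximal set `prox_{tf}(x)`: the set of minimizers of `z ↦ f z + ‖z - x‖²/(2t)`. -/
def proxSet {n : ℕ} (f : EuclideanSpace ℝ (Fin n) → ℝ) (t : ℝ)
    (x : EuclideanSpace ℝ (Fin n)) : Set (EuclideanSpace ℝ (Fin n)) :=
  {z | ∀ w, f z + ‖z - x‖ ^ 2 / (2 * t) ≤ f w + ‖w - x‖ ^ 2 / (2 * t)}

open RealInnerProductSpace in
lemma aux_grad_eq {n : ℕ} {f : EuclideanSpace ℝ (Fin n) → ℝ}
    (hbdd : BddBelow (Set.range f))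
    {t : ℝ} (ht : 0 < t) {x : EuclideanSpace ℝ (Fin n)}
    (hdiff : DifferentiableAt ℝ (moreauEnv f t) x)
    {z : EuclideanSpace ℝ (Fin n)} (hz : z ∈ proxSet f t x) :
    gradient (moreauEnv f t) x = t⁻¹ • (x - z) := by
  obtain ⟨m, hm⟩ := hbdd
  have hm' : ∀ w, m ≤ f w := fun w => hm ⟨w, rfl⟩
  set u := moreauEnv f t with hu
  set g := gradient u x with hg
  set v : EuclideanSpace ℝ (Fin n) := t⁻¹ • (x - z) with hv
  have hb : ∀ y : EuclideanSpace ℝ (Fin n),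
      BddBelow (Set.range fun w => f w + ‖w - y‖ ^ 2 / (2 * t)) := by
    intro y
    refine ⟨m, ?_⟩
    rintro _ ⟨w, rfl⟩
    have : 0 ≤ ‖w - y‖ ^ 2 / (2 * t) := by positivity
    linarith [hm' w]
  have hux : u x = f z + ‖z - x‖ ^ 2 / (2 * t) :=
    le_antisymm (ciInf_le (hb x) z) (le_ciInf hz)
  have key : ∀ y, u y ≤ u x + ⟪v, y - x⟫ + ‖y - x‖ ^ 2 / (2 * t) := by
    intro y
    have h1 : u y ≤ f z + ‖z - y‖ ^ 2 / (2 * t) := ciInf_le (hb y) z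
    have hexp : ‖z - y‖ ^ 2 = ‖z - x‖ ^ 2 - 2 * ⟪z - x, y - x⟫ + ‖y - x‖ ^ 2 := by
      have hzy : z - y = (z - x) - (y - x) := by abel
      rw [hzy, norm_sub_sq_real]; try ring
    have hvin : ⟪v, y - x⟫ = -(t⁻¹ * ⟪z - x, y - x⟫) := by
      rw [hv, real_inner_smul_left, show x - z = -(z - x) by abel, inner_neg_left]
      ring
    rw [hux, hvin]
    have ht' : (2 : ℝ) * t ≠ 0 := by positivity
    have : f z + ‖z - y‖ ^ 2 / (2 * t)
        = f z + ‖z - x‖ ^ 2 / (2 * t) + -(t⁻¹ * ⟪z - x, y - x⟫) + ‖y - x‖ ^ 2 / (2 * t) := by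
      rw [hexp]; field_simp; try ring
    linarith [h1, this.ge, this.le]
  have hgrad : HasGradientAt u g x := hdiff.hasGradientAt
  have hgf : HasFDerivAt u ((InnerProductSpace.toDual ℝ _) g) x := hgrad.hasFDerivAt
  have hinner : ∀ h : EuclideanSpace ℝ (Fin n), ⟪g, h⟫ = ⟪v, h⟫ := by
    intro h
    have hline : HasDerivAt (fun s : ℝ => x + s • h) h 0 := by
      simpa using ((hasDerivAt_id (0 : ℝ)).smul_const h).const_add x
    have hcomp : HasDerivAt (fun s : ℝ => u (x + s • h)) (⟪g, h⟫) 0 := by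
      have hgf' : HasFDerivAt u ((InnerProductSpace.toDual ℝ _) g) (x + (0 : ℝ) • h) := by
        simpa using hgf
      have := hgf'.comp_hasDerivAt (0 : ℝ) hline
      simpa [Function.comp_def, InnerProductSpace.toDual_apply_apply] using this
    set c : ℝ → ℝ := fun s => u (x + s • h) - u x - s * ⟪v, h⟫ - s ^ 2 * (‖h‖ ^ 2 / (2 * t))
      with hc
    have hcder : HasDerivAt c (⟪g, h⟫ - ⟪v, h⟫) 0 := by
      have h1 : HasDerivAt (fun s : ℝ => s * ⟪v, h⟫) ⟪v, h⟫ 0 := by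
        simpa using (hasDerivAt_id (0 : ℝ)).mul_const ⟪v, h⟫
      have h2 : HasDerivAt (fun s : ℝ => s ^ 2 * (‖h‖ ^ 2 / (2 * t))) 0 0 := by
        simpa using (hasDerivAt_pow 2 (0 : ℝ)).mul_const (‖h‖ ^ 2 / (2 * t))
      have h3 := ((hcomp.sub_const (u x)).sub h1).sub h2
      rw [sub_zero] at h3
      exact h3
    have hmax : IsLocalMax c 0 := by
      have hc0 : c 0 = 0 := by simp [hc]
      refine Filter.Eventually.of_forall fun s => ?_
      rw [hc0]
      have hk := key (x + s • h)
      have h1 : ((x + s • h) - x) = s • h := by abel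
      rw [h1] at hk
      have h2 : ⟪v, s • h⟫ = s * ⟪v, h⟫ := real_inner_smul_right v h s
      have h3 : ‖s • h‖ ^ 2 = s ^ 2 * ‖h‖ ^ 2 := by
        rw [norm_smul, mul_pow, Real.norm_eq_abs, sq_abs]
      rw [h2, h3] at hk
      have ht' : (0:ℝ) < 2 * t := by positivity
      simp only [hc]
      have : s ^ 2 * ‖h‖ ^ 2 / (2 * t) = s ^ 2 * (‖h‖ ^ 2 / (2 * t)) := by ring
      linarith [hk, this.le, this.ge]
    have := hmax.hasDerivAt_eq_zero hcder
    linarith [this]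
  have hsub : ∀ h : EuclideanSpace ℝ (Fin n), ⟪g - v, h⟫ = 0 := by
    intro h; rw [inner_sub_left, hinner h]; ring
  have : g - v = 0 := by
    have := hsub (g - v)
    rwa [inner_self_eq_zero] at this
  have := sub_eq_zero.mp this
  simpa [hg, hv] using this

lemma aux_prox_nonempty {n : ℕ} {f : EuclideanSpace ℝ (Fin n) → ℝ}
    (hf : Continuous f) (hbdd : BddBelow (Set.range f))
    {t : ℝ} (ht : 0 < t) (x : EuclideanSpace ℝ (Fin n)) :
    ∃ z, z ∈ proxSet f t x := by
  obtain ⟨m, hm⟩ := hbdd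
  have hm' : ∀ w, m ≤ f w := fun w => hm ⟨w, rfl⟩
  have hcont : Continuous (fun z : EuclideanSpace ℝ (Fin n) => f z + ‖z - x‖ ^ 2 / (2 * t)) := by
    fun_prop
  have hcoer : Tendsto (fun z : EuclideanSpace ℝ (Fin n) => f z + ‖z - x‖ ^ 2 / (2 * t))
      (cocompact _) atTop := by
    have hlow : Tendsto (fun z : EuclideanSpace ℝ (Fin n) => m + (‖z‖ - ‖x‖) ^ 2 / (2 * t))
        (cocompact _) atTop := by
      have h1 : Tendsto (fun s : ℝ => m + (s - ‖x‖) ^ 2 / (2 * t)) atTop atTop := by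
        apply tendsto_atTop_add_const_left
        apply Tendsto.atTop_div_const (by positivity)
        exact (tendsto_pow_atTop (two_ne_zero)).comp (tendsto_atTop_add_const_right _ _ tendsto_id)
      exact h1.comp tendsto_norm_cocompact_atTop
    refine tendsto_atTop_mono (fun z => ?_) hlow
    have habs : |‖z‖ - ‖x‖| ≤ ‖z - x‖ := abs_norm_sub_norm_le z x
    have hsq : (‖z‖ - ‖x‖) ^ 2 ≤ ‖z - x‖ ^ 2 := by
      nlinarith [sq_abs (‖z‖ - ‖x‖), abs_nonneg (‖z‖ - ‖x‖), norm_nonneg (z - x)]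
    have h2t : (0:ℝ) < 2 * t := by positivity
    have hdiv : (‖z‖ - ‖x‖) ^ 2 / (2 * t) ≤ ‖z - x‖ ^ 2 / (2 * t) := by gcongr
    linarith [hm' z]
  obtain ⟨z, hz⟩ := hcont.exists_forall_le hcoer
  exact ⟨z, hz⟩

theorem stmt_2 (n : ℕ) (f : EuclideanSpace ℝ (Fin n) → ℝ)
    (hf : Continuous f) (hbdd : BddBelow (Set.range f))
    (t : ℝ) (ht : 0 < t) (x : EuclideanSpace ℝ (Fin n))
    (hdiff : DifferentiableAt ℝ (moreauEnv f t) x) :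
    ∃ xhat : EuclideanSpace ℝ (Fin n), proxSet f t x = {xhat} ∧
      gradient (moreauEnv f t) x = t⁻¹ • (x - xhat) := by
  obtain ⟨z, hz⟩ := aux_prox_nonempty hf hbdd ht x
  have hgz := aux_grad_eq hbdd ht hdiff hz
  refine ⟨z, ?_, hgz⟩
  ext w
  simp only [Set.mem_singleton_iff]
  constructor
  · intro hw
    have hgw := aux_grad_eq hbdd ht hdiff hw
    have : t⁻¹ • (x - z) = t⁻¹ • (x - w) := by rw [← hgz, ← hgw]
    have ht' : t⁻¹ ≠ 0 := inv_ne_zero ht.ne'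
    have := smul_right_injective (EuclideanSpace ℝ (Fin n)) ht' this
    have hzw : z = w := by
      have h2 := congrArg (fun a => x - a) this
      simpa using h2
    exact hzw.symm
  · rintro rfl; exact hz
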